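/- Let σ > 0, α > 0, let Φ denote the cumulative distribution function of the standard Gaussian distribution and φ its density, and define h(x) = Φ(x/σ), so that h'(x) = φ(x/σ)/σ. Then for all x with |x| ≤ α, |h'(x)| / (h(x)(1 - h(x))) ≤ 8(α/σ + 1)/σ. -/

import Mathlib

open MeasureTheory

/-- Density of the standard Gaussian distribution. -/
noncomputable def stdGaussianPDF (x : ℝ) : ℝ :=
  (Real.sqrt (2 * Real.pi))⁻¹ * Real.exp (-(x ^ 2) / 2)

/-- Cumulative distribution function of the standard Gaussian distribution. -/
noncomputable def stdGaussianCDF (x : ℝ) : ℝ :=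
  ∫ t in Set.Iic x, stdGaussianPDF t

lemma pdf_pos (t : ℝ) : 0 < stdGaussianPDF t := by
  unfold stdGaussianPDF
  positivity

lemma pdf_integrable : Integrable stdGaussianPDF := by
  have : Integrable (fun x : ℝ => Real.exp (-(1/2 : ℝ) * x ^ 2)) :=
    integrable_exp_neg_mul_sq (by norm_num)
  have h2 := this.const_mul (Real.sqrt (2 * Real.pi))⁻¹
  refine h2.congr (Filter.Eventually.of_forall fun x => ?_)
  unfold stdGaussianPDF
  have : -(1/2 : ℝ) * x ^ 2 = -(x ^ 2) / 2 := by ring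
  simp only [this]

lemma integral_pdf : ∫ t, stdGaussianPDF t = 1 := by
  unfold stdGaussianPDF
  rw [MeasureTheory.integral_const_mul]
  have : ∀ x : ℝ, Real.exp (-(x ^ 2) / 2) = Real.exp (-(1/2 : ℝ) * x ^ 2) := by
    intro x; ring_nf
  simp_rw [this, integral_gaussian]
  rw [inv_mul_eq_one₀ (by positivity)]
  rw [show Real.pi / (1/2 : ℝ) = 2 * Real.pi by ring]

lemma cdf_add_tail (x : ℝ) : stdGaussianCDF x + ∫ t in Set.Ioi x, stdGaussianPDF t = 1 := by
  rw [stdGaussianCDF, intervalIntegral.integral_Iic_add_Ioi pdf_integrable.integrableOn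
    pdf_integrable.integrableOn, integral_pdf]

lemma tail_pos (x : ℝ) : 0 < ∫ t in Set.Ioi x, stdGaussianPDF t := by
  rw [MeasureTheory.setIntegral_pos_iff_support_of_nonneg_ae
    (Filter.Eventually.of_forall fun t => (pdf_pos t).le) pdf_integrable.integrableOn]
  have : Function.support stdGaussianPDF = Set.univ := by
    ext t; simp [(pdf_pos t).ne']
  rw [this, Set.univ_inter]
  simp [Real.volume_Ioi]

lemma cdf_pos (x : ℝ) : 0 < stdGaussianCDF x := by
  rw [stdGaussianCDF]
  rw [MeasureTheory.setIntegral_pos_iff_support_of_nonneg_ae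
    (Filter.Eventually.of_forall fun t => (pdf_pos t).le) pdf_integrable.integrableOn]
  have : Function.support stdGaussianPDF = Set.univ := by
    ext t; simp [(pdf_pos t).ne']
  rw [this, Set.univ_inter]
  simp [Real.volume_Iic]

lemma cdf_lt_one (x : ℝ) : stdGaussianCDF x < 1 := by
  have := cdf_add_tail x
  have := tail_pos x
  linarith

lemma cdf_symm (x : ℝ) : stdGaussianCDF (-x) = 1 - stdGaussianCDF x := by
  have h1 : stdGaussianCDF (-x) = ∫ t in Set.Ioi x, stdGaussianPDF t := by
    rw [stdGaussianCDF, ← integral_comp_neg_Ioi]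
    congr 1; ext t
    unfold stdGaussianPDF; ring_nf
  have := cdf_add_tail x
  linarith

lemma cdf_zero : stdGaussianCDF 0 = 1/2 := by
  have := cdf_symm 0
  rw [neg_zero] at this
  linarith

lemma cdf_mono : Monotone stdGaussianCDF := by
  intro a b hab
  exact MeasureTheory.setIntegral_mono_set pdf_integrable.integrableOn
    (Filter.Eventually.of_forall fun t => (pdf_pos t).le)
    (HasSubset.Subset.eventuallyLE (Set.Iic_subset_Iic.mpr hab))

lemma pdf_antitone {a b : ℝ} (ha : 0 ≤ a) (hab : a ≤ b) :
    stdGaussianPDF b ≤ stdGaussianPDF a := by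
  unfold stdGaussianPDF
  have : Real.exp (-(b ^ 2) / 2) ≤ Real.exp (-(a ^ 2) / 2) := by
    apply Real.exp_le_exp.mpr
    nlinarith
  have hc : (0:ℝ) < (Real.sqrt (2 * Real.pi))⁻¹ := by positivity
  nlinarith

lemma tail_lower (y : ℝ) (hy : 0 ≤ y) :
    stdGaussianPDF y / (2 * Real.exp (5/8) * (y + 1)) ≤ ∫ t in Set.Ioi y, stdGaussianPDF t := by
  set δ : ℝ := 1 / (2 * (y + 1)) with hδdef
  have hy1 : (0:ℝ) < y + 1 := by linarith
  have hδpos : 0 < δ := by positivity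
  have hδle : δ ≤ 1/2 := by
    rw [hδdef, div_le_div_iff₀ (by positivity) (by norm_num)]
    linarith
  -- step 1: tail ≥ integral over Ioc y (y+δ)
  have h1 : ∫ t in Set.Ioc y (y + δ), stdGaussianPDF t ≤ ∫ t in Set.Ioi y, stdGaussianPDF t := by
    apply MeasureTheory.setIntegral_mono_set pdf_integrable.integrableOn
      (Filter.Eventually.of_forall fun t => (pdf_pos t).le)
    exact HasSubset.Subset.eventuallyLE Set.Ioc_subset_Ioi_self
  -- step 2: integral over Ioc ≥ δ * pdf (y+δ)
  have h2 : δ * stdGaussianPDF (y + δ) ≤ ∫ t in Set.Ioc y (y + δ), stdGaussianPDF t := by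
    have hconst : MeasureTheory.IntegrableOn (fun _ : ℝ => stdGaussianPDF (y + δ)) (Set.Ioc y (y + δ)) := by
      refine (MeasureTheory.integrableOn_const_iff (C := stdGaussianPDF (y + δ))).mpr (Or.inr ?_)
      rw [Real.volume_Ioc]; exact ENNReal.ofReal_lt_top
    have := MeasureTheory.setIntegral_mono_on hconst
      pdf_integrable.integrableOn measurableSet_Ioc
      (fun t ht => pdf_antitone (by linarith [ht.1]) ht.2)
    rw [MeasureTheory.setIntegral_const] at this
    rw [Real.volume_real_Ioc, smul_eq_mul] at this
    rw [max_eq_left (by linarith)] at this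
    calc δ * stdGaussianPDF (y + δ) = (y + δ - y) * stdGaussianPDF (y + δ) := by ring_nf
      _ ≤ _ := this
  -- step 3: pdf (y+δ) ≥ exp(-5/8) * pdf y
  have h3 : Real.exp (-(5/8)) * stdGaussianPDF y ≤ stdGaussianPDF (y + δ) := by
    unfold stdGaussianPDF
    rw [mul_comm (Real.exp (-(5/8))), mul_assoc, ← Real.exp_add]
    have hle : -(y ^ 2) / 2 + -(5/8) ≤ -((y + δ) ^ 2) / 2 := by
      have hδeq : δ * (2 * (y + 1)) = 1 := by
        rw [hδdef]; field_simp
      have hyδ : y * δ ≤ 1/2 := by nlinarith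
      have hδsq : δ ^ 2 ≤ 1/4 := by nlinarith
      nlinarith
    have := Real.exp_le_exp.mpr hle
    have hc : (0:ℝ) < (Real.sqrt (2 * Real.pi))⁻¹ := by positivity
    nlinarith
  have key : stdGaussianPDF y / (2 * Real.exp (5/8) * (y + 1)) = Real.exp (-(5/8)) * stdGaussianPDF y * δ := by
    rw [hδdef, Real.exp_neg,
      div_eq_iff (by positivity : (0:ℝ) < 2 * Real.exp (5/8) * (y + 1)).ne']
    field_simp
  rw [key]
  calc Real.exp (-(5/8)) * stdGaussianPDF y * δ ≤ stdGaussianPDF (y + δ) * δ := by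
        nlinarith [pdf_pos (y+δ)]
    _ = δ * stdGaussianPDF (y + δ) := by ring
    _ ≤ _ := le_trans h2 h1

lemma exp58_le : Real.exp (5/8 : ℝ) ≤ 2 := by
  rw [show (2:ℝ) = Real.exp (Real.log 2) by rw [Real.exp_log]; norm_num]
  apply Real.exp_le_exp.mpr
  have := Real.log_two_gt_d9
  linarith

lemma core (y : ℝ) (hy : 0 ≤ y) :
    stdGaussianPDF y / (stdGaussianCDF y * (1 - stdGaussianCDF y)) ≤ 8 * (y + 1) := by
  have hΦ : 1/2 ≤ stdGaussianCDF y := by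
    rw [← cdf_zero]; exact cdf_mono hy
  have htail : stdGaussianPDF y / (2 * Real.exp (5/8) * (y + 1)) ≤ 1 - stdGaussianCDF y := by
    have := tail_lower y hy
    have := cdf_add_tail y
    linarith
  have hφ := pdf_pos y
  have hΦlt := cdf_lt_one y
  have hΦpos := cdf_pos y
  have hy1 : (0:ℝ) < y + 1 := by linarith
  have hexp : (0:ℝ) < Real.exp (5/8) := Real.exp_pos _
  rw [div_le_iff₀ (by nlinarith)]
  have h1 : stdGaussianPDF y ≤ 2 * Real.exp (5/8) * (y + 1) * (1 - stdGaussianCDF y) := by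
    rw [div_le_iff₀ (by positivity)] at htail
    linarith [htail]
  calc stdGaussianPDF y ≤ 2 * Real.exp (5/8) * (y + 1) * (1 - stdGaussianCDF y) := h1
    _ ≤ 4 * (y + 1) * (1 - stdGaussianCDF y) := by nlinarith [exp58_le]
    _ ≤ 8 * (y + 1) * (stdGaussianCDF y * (1 - stdGaussianCDF y)) := by nlinarith
    _ = 8 * (y + 1) * (stdGaussianCDF y * (1 - stdGaussianCDF y)) := rfl

lemma core_abs (y : ℝ) :
    stdGaussianPDF y / (stdGaussianCDF y * (1 - stdGaussianCDF y)) ≤ 8 * (|y| + 1) := by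
  rcases le_or_gt 0 y with hy | hy
  · rw [abs_of_nonneg hy]; exact core y hy
  · have h1 : stdGaussianPDF y = stdGaussianPDF (-y) := by
      unfold stdGaussianPDF; ring_nf
    have h2 : stdGaussianCDF y * (1 - stdGaussianCDF y)
        = stdGaussianCDF (-y) * (1 - stdGaussianCDF (-y)) := by
      rw [cdf_symm]; ring
    rw [abs_of_neg hy, h1, h2]
    exact core (-y) (by linarith)

theorem stmt_11 (σ α : ℝ) (hσ : 0 < σ) (hα : 0 < α)
    (h h' : ℝ → ℝ) (hdef : ∀ x, h x = stdGaussianCDF (x / σ))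
    (hderiv : ∀ x, h' x = stdGaussianPDF (x / σ) / σ) :
    ∀ x, |x| ≤ α → |h' x| / (h x * (1 - h x)) ≤ 8 * (α / σ + 1) / σ := by
  intro x hx
  rw [hdef, hderiv]
  set y := x / σ with hydef
  have habs : |stdGaussianPDF y / σ| = stdGaussianPDF y / σ :=
    abs_of_nonneg (div_nonneg (pdf_pos y).le hσ.le)
  rw [habs]
  have hyle : |y| ≤ α / σ := by
    rw [hydef, abs_div, abs_of_pos hσ]
    gcongr
  have hcore := core_abs y
  have hden : 0 < stdGaussianCDF y * (1 - stdGaussianCDF y) := by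
    have := cdf_pos y; have := cdf_lt_one y; nlinarith
  calc stdGaussianPDF y / σ / (stdGaussianCDF y * (1 - stdGaussianCDF y))
      = (stdGaussianPDF y / (stdGaussianCDF y * (1 - stdGaussianCDF y))) / σ := by ring
    _ ≤ 8 * (|y| + 1) / σ := by gcongr
    _ ≤ 8 * (α / σ + 1) / σ := by gcongr
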